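/- Every completely regular Hausdorff (Tychonoff) space X that is locally countably compact (every point has a countably compact neighborhood) but not countably compact has a one-point extension Y (a space containing X as a dense subspace with Y \ X a singleton) that is Tychonoff and countably compact. -/

import Mathlib

universe u

/-- A space is countably compact if every countable open cover has a finite subcover. -/
def CountablyCompact (X : Type u) [TopologicalSpace X] : Prop :=
  ∀ U : ℕ → Set X, (∀ n, IsOpen (U n)) → (⋃ n, U n) = Set.univ →
    ∃ t : Finset ℕ, (⋃ n ∈ t, U n) = Set.univ

open Set Topology Filter

/-- Relative countable compactness of a subset. -/
def CCIn {Z : Type*} [TopologicalSpace Z] (s : Set Z) : Prop :=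
  ∀ U : ℕ → Set Z, (∀ n, IsOpen (U n)) → s ⊆ ⋃ n, U n →
    ∃ t : Finset ℕ, s ⊆ ⋃ n ∈ t, U n

lemma ccIn_of_cc {Z : Type*} [TopologicalSpace Z] {s : Set Z}
    (h : CountablyCompact ↥s) : CCIn s := by
  intro U hU hcov
  obtain ⟨t, ht⟩ := h (fun n => Subtype.val ⁻¹' U n)
    (fun n => (hU n).preimage continuous_subtype_val)
    (by
      ext z
      simp only [mem_iUnion, mem_univ, iff_true, mem_preimage]
      obtain ⟨n, hn⟩ := mem_iUnion.1 (hcov z.2)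
      exact ⟨n, hn⟩)
  refine ⟨t, fun z hz => ?_⟩
  have := ht ▸ mem_univ (⟨z, hz⟩ : s)
  have h2 : (⟨z, hz⟩ : s) ∈ ⋃ n ∈ t, Subtype.val ⁻¹' U n := by rw [ht]; trivial
  simp only [mem_iUnion, mem_preimage] at h2 ⊢
  exact h2

lemma cc_of_ccIn_univ {Z : Type*} [TopologicalSpace Z]
    (h : CCIn (univ : Set Z)) : CountablyCompact Z := by
  intro U hU hcov
  obtain ⟨t, ht⟩ := h U hU (by rw [hcov])
  exact ⟨t, eq_univ_of_univ_subset ht⟩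

lemma CCIn.mono_closed {Z : Type*} [TopologicalSpace Z] {s A : Set Z}
    (h : CCIn s) (hA : IsClosed A) (hAs : A ⊆ s) : CCIn A := by
  intro U hU hcov
  obtain ⟨t, ht⟩ := h (fun n => U n ∪ Aᶜ)
    (fun n => (hU n).union hA.isOpen_compl)
    (fun z _ => by
      by_cases hz : z ∈ A
      · obtain ⟨n, hn⟩ := mem_iUnion.1 (hcov hz)
        exact mem_iUnion.2 ⟨n, Or.inl hn⟩
      · exact mem_iUnion.2 ⟨0, Or.inr hz⟩)
  refine ⟨t, fun z hz => ?_⟩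
  obtain ⟨n, hn, hmem⟩ := by simpa only [mem_iUnion] using ht (hAs hz)
  rcases hmem with h1 | h2
  · exact mem_iUnion₂.2 ⟨n, hn, h1⟩
  · exact absurd hz h2

lemma CCIn.union {Z : Type*} [TopologicalSpace Z] {s₁ s₂ : Set Z}
    (h₁ : CCIn s₁) (h₂ : CCIn s₂) : CCIn (s₁ ∪ s₂) := by
  intro U hU hcov
  obtain ⟨t₁, ht₁⟩ := h₁ U hU (subset_union_left.trans hcov)
  obtain ⟨t₂, ht₂⟩ := h₂ U hU (subset_union_right.trans hcov)
  refine ⟨t₁ ∪ t₂, union_subset (ht₁.trans ?_) (ht₂.trans ?_)⟩ <;>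
  · intro z hz
    obtain ⟨n, hn, hm⟩ := mem_iUnion₂.1 hz
    exact mem_iUnion₂.2 ⟨n, by simp [Finset.mem_union, hn], hm⟩

lemma ccIn_empty {Z : Type*} [TopologicalSpace Z] : CCIn (∅ : Set Z) :=
  fun _ _ _ => ⟨∅, by simp⟩

lemma ccIn_finsetBiUnion {Z ι : Type*} [TopologicalSpace Z] (fs : Finset ι)
    {M : ι → Set Z} (h : ∀ x ∈ fs, CCIn (M x)) : CCIn (⋃ x ∈ fs, M x) := by
  classical
  induction fs using Finset.induction with
  | empty => simpa using ccIn_empty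
  | @insert a fs' hx ih =>
    rw [Finset.set_biUnion_insert]
    exact (h a (Finset.mem_insert_self a fs')).union
      (ih fun x hxm => h x (Finset.mem_insert_of_mem hxm))

lemma CCIn.image {Z W : Type*} [TopologicalSpace Z] [TopologicalSpace W] {s : Set Z}
    {f : Z → W} (h : CCIn s) (hf : Continuous f) : CCIn (f '' s) := by
  intro U hU hcov
  obtain ⟨t, ht⟩ := h (fun n => f ⁻¹' U n) (fun n => (hU n).preimage hf)
    (fun z hz => by
      obtain ⟨n, hn⟩ := mem_iUnion.1 (hcov ⟨z, hz, rfl⟩)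
      exact mem_iUnion.2 ⟨n, hn⟩)
  refine ⟨t, ?_⟩
  rintro w ⟨z, hz, rfl⟩
  obtain ⟨n, hn, hmem⟩ := mem_iUnion₂.1 (ht hz)
  exact mem_iUnion₂.2 ⟨n, hn, hmem⟩

lemma completelyRegularSpace_subtype {Z : Type*} [TopologicalSpace Z]
    [CompletelyRegularSpace Z] (S : Set Z) : CompletelyRegularSpace ↥S := by
  constructor
  intro x K hK hxK
  obtain ⟨K', hK', rfl⟩ := isClosed_induced_iff.1 hK
  obtain ⟨f, hf, hfx, hfK⟩ :=
    CompletelyRegularSpace.completely_regular (x : Z) K' hK' (fun h => hxK h)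
  exact ⟨f ∘ Subtype.val, hf.comp continuous_subtype_val, hfx, fun y hy => hfK hy⟩

lemma isEmbedding_stoneCechUnit' {X : Type u} [TopologicalSpace X] [T35Space X] :
    Topology.IsEmbedding (stoneCechUnit : X → StoneCech X) := by
  refine ⟨isInducing_iff_nhds.2 fun x => le_antisymm
    (continuous_stoneCechUnit.continuousAt.le_comap) ?_, injective_stoneCechUnit_of_t35Space⟩
  intro U hU
  obtain ⟨O, hOU, hOopen, hxO⟩ := mem_nhds_iff.1 hU
  obtain ⟨f, hf, hfx, hfK⟩ := CompletelyRegularSpace.completely_regular x Oᶜ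
    hOopen.isClosed_compl (by simpa using hxO)
  refine mem_comap.2 ⟨stoneCechExtend hf ⁻¹' {(1 : unitInterval)}ᶜ,
    ?_, fun y hy => ?_⟩
  · refine IsOpen.mem_nhds ((isClosed_singleton.isOpen_compl).preimage
      (continuous_stoneCechExtend hf)) ?_
    have : stoneCechExtend hf (stoneCechUnit x) = f x := congrFun (stoneCechExtend_extends hf) x
    simp only [mem_preimage, mem_compl_iff, mem_singleton_iff, this, hfx]
    exact fun h => zero_ne_one h
  · have : stoneCechExtend hf (stoneCechUnit y) = f y := congrFun (stoneCechExtend_extends hf) y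
    simp only [mem_preimage, mem_compl_iff, mem_singleton_iff, this] at hy
    by_contra hyU
    have hyO : y ∈ Oᶜ := fun h => hyU (hOU h)
    exact hy (hfK hyO)
theorem one_point_countably_compact_extension
    (X : Type u) [TopologicalSpace X] [T35Space X]
    (hloc : ∀ x : X, ∃ N ∈ nhds x, CountablyCompact ↥N)
    (hncc : ¬ CountablyCompact X) :
    ∃ (Y : Type u) (_ : TopologicalSpace Y) (e : X → Y),
      Topology.IsEmbedding e ∧ Dense (Set.range e) ∧ (∃ p : Y, (Set.range e)ᶜ = {p}) ∧
      T35Space Y ∧ CountablyCompact Y := by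
  classical
  set B := StoneCech X with hB
  set u : X → B := stoneCechUnit with hu_def
  have hu : Topology.IsEmbedding u := isEmbedding_stoneCechUnit'
  have hud : DenseRange u := denseRange_stoneCechUnit
  -- closed countably compact neighborhoods
  have key : ∀ x : X, ∃ M : Set X, M ∈ nhds x ∧ IsClosed M ∧ CCIn M := by
    intro x
    obtain ⟨N, hN, hNcc⟩ := hloc x
    obtain ⟨M, ⟨hMnh, hMcl⟩, hMN⟩ := (closed_nhds_basis x).mem_iff.1 hN
    exact ⟨M, hMnh, hMcl, (ccIn_of_cc hNcc).mono_closed hMcl hMN⟩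
  choose M hMn hMcl hMcc using key
  set C : Set B := ⋃ x, interior (closure (u '' M x)) with hC_def
  have hCopen : IsOpen C := isOpen_iUnion fun _ => isOpen_interior
  have hXC : ∀ x, u x ∈ C := by
    intro x
    obtain ⟨V, hVopen, hVeq⟩ := hu.toIsInducing.isOpen_iff.1 (isOpen_interior (s := M x))
    have hxV : u x ∈ V := by
      rw [← Set.mem_preimage, hVeq]
      exact mem_interior_iff_mem_nhds.2 (hMn x)
    have hVsub : V ⊆ closure (u '' M x) := by
      refine (hud.open_subset_closure_inter hVopen).trans (closure_mono ?_)
      rintro b ⟨hbV, y, rfl⟩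
      have : y ∈ interior (M x) := by rw [← hVeq]; exact hbV
      exact ⟨y, interior_subset this, rfl⟩
    exact Set.mem_iUnion.2 ⟨x, interior_maximal hVsub hVopen hxV⟩
  set T : Set B := Cᶜ with hT_def
  have hTclosed : IsClosed T := hCopen.isClosed_compl
  have hCT : ∀ b, b ∈ C → b ∉ T := fun b hb hbT => hbT hb
  have hpull : ∀ (y : X) (x : X), u y ∈ closure (u '' M x) → y ∈ M x := by
    intro y x hy
    have : y ∈ closure (M x) := by
      rw [hu.toIsInducing.closure_eq_preimage_closure_image (M x)]
      exact hy
    rwa [(hMcl x).closure_eq] at this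
  have hTne : T.Nonempty := by
    by_contra hne
    rw [Set.not_nonempty_iff_eq_empty, hT_def, Set.compl_empty_iff] at hne
    obtain ⟨s, hs⟩ := isCompact_univ.elim_finite_subcover
      (fun x => interior (closure (u '' M x))) (fun _ => isOpen_interior)
      (by rw [← hC_def, hne])
    have hXcov : (Set.univ : Set X) ⊆ ⋃ x ∈ s, M x := by
      intro y _
      obtain ⟨x, hxs, hyx⟩ := Set.mem_iUnion₂.1 (hs (Set.mem_univ (u y)))
      exact Set.mem_iUnion₂.2 ⟨x, hxs, hpull y x (interior_subset hyx)⟩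
    exact hncc (cc_of_ccIn_univ
      (((ccIn_finsetBiUnion s fun x _ => hMcc x).mono_closed isClosed_univ hXcov)))
  obtain ⟨t₀, ht₀⟩ := hTne
  -- collapse T to a point
  letI st : Setoid B :=
    ⟨fun a b => a = b ∨ (a ∈ T ∧ b ∈ T),
     ⟨fun _ => Or.inl rfl,
      fun h => h.elim (fun h => Or.inl h.symm) (fun h => Or.inr ⟨h.2, h.1⟩),
      fun h1 h2 => by
        rcases h1 with rfl | h1
        · exact h2
        · rcases h2 with rfl | h2
          · exact Or.inr h1
          · exact Or.inr ⟨h1.1, h2.2⟩⟩⟩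
  set Y' := Quotient st with hY'_def
  set q : B → Y' := Quotient.mk st with hq_def
  have hq_cont : Continuous q := continuous_quotient_mk'
  have hq_eq : ∀ a b : B, q a = q b ↔ (a = b ∨ (a ∈ T ∧ b ∈ T)) := fun a b => Quotient.eq
  have hq_surj : Function.Surjective q := Quotient.mk_surjective
  have hsat : ∀ V : Set B, (V ∩ T = ∅ ∨ T ⊆ V) → q ⁻¹' (q '' V) = V := by
    intro V hV
    ext b
    simp only [Set.mem_preimage, Set.mem_image]
    constructor
    · rintro ⟨a, haV, hab⟩
      rcases (hq_eq a b).1 hab with rfl | ⟨haT, hbT⟩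
      · exact haV
      · rcases hV with hV | hV
        · exact absurd (Set.mem_inter haV haT) (by rw [hV]; exact fun h => h)
        · exact hV hbT
    · exact fun hb => ⟨b, hb, rfl⟩
  have hqopen : ∀ V : Set B, IsOpen V → (V ∩ T = ∅ ∨ T ⊆ V) → IsOpen (q '' V) := by
    intro V hVopen hV
    rw [isOpen_coinduced (f := q)]
    rwa [hsat V hV]
  have hdisj : ∀ U V : Set B, Disjoint U V → (U ∩ T = ∅ ∨ T ⊆ U) →
      Disjoint (q '' U) (q '' V) := by
    intro U V hUV hUsat
    rw [Set.disjoint_left]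
    rintro y ⟨a, haU, rfl⟩ ⟨b, hbV, hab⟩
    rcases (hq_eq b a).1 hab with rfl | ⟨hbT, haT⟩
    · exact Set.disjoint_left.1 hUV haU hbV
    · rcases hUsat with hs | hs
      · exact absurd (Set.mem_inter haU haT) (by rw [hs]; exact fun h => h)
      · exact Set.disjoint_left.1 hUV (hs hbT) hbV
  haveI hT2 : T2Space Y' := by
    constructor
    intro ya yb hab
    obtain ⟨a, rfl⟩ := hq_surj ya
    obtain ⟨b, rfl⟩ := hq_surj yb
    have hne : ¬ (a = b ∨ (a ∈ T ∧ b ∈ T)) := fun h => hab ((hq_eq a b).2 h)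
    push_neg at hne
    obtain ⟨hne_ab, hne_T⟩ := hne
    by_cases haT : a ∈ T
    · have hbT : b ∉ T := fun h => (hne_T haT) h
      obtain ⟨U, V, hUo, hVo, hTU, hbV, hUV⟩ := normal_separation hTclosed
        isClosed_singleton (Set.disjoint_singleton_right.2 hbT)
      exact ⟨q '' U, q '' V, hqopen U hUo (Or.inr hTU), hqopen V hVo
        (Or.inl (Set.disjoint_iff_inter_eq_empty.1 (hUV.symm.mono_right hTU))),
        ⟨a, hTU haT, rfl⟩, ⟨b, hbV (Set.mem_singleton b), rfl⟩,
        hdisj U V hUV (Or.inr hTU)⟩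
    · by_cases hbT : b ∈ T
      · obtain ⟨U, V, hUo, hVo, hTU, haV, hUV⟩ := normal_separation hTclosed
          isClosed_singleton (Set.disjoint_singleton_right.2 haT)
        exact ⟨q '' V, q '' U, hqopen V hVo
          (Or.inl (Set.disjoint_iff_inter_eq_empty.1 (hUV.symm.mono_right hTU))),
          hqopen U hUo (Or.inr hTU), ⟨a, haV (Set.mem_singleton a), rfl⟩,
          ⟨b, hTU hbT, rfl⟩, (hdisj U V hUV (Or.inr hTU)).symm⟩
      · obtain ⟨U, W, hUo, hWo, haU, hTbW, hUW⟩ := normal_separation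
          isClosed_singleton (hTclosed.union isClosed_singleton)
          (by
            rw [Set.disjoint_singleton_left]
            rintro (h | h)
            · exact haT h
            · exact hne_ab h)
        obtain ⟨V, W2, hVo, hW2o, hbV, hTaW2, hVW2⟩ := normal_separation
          isClosed_singleton (hTclosed.union isClosed_singleton)
          (by
            rw [Set.disjoint_singleton_left]
            rintro (h | h)
            · exact hbT h
            · exact hne_ab h.symm)
        refine ⟨q '' (U ∩ W2), q '' (V ∩ W), hqopen _ (hUo.inter hW2o)
          (Or.inl ?_), hqopen _ (hVo.inter hWo) (Or.inl ?_),
          ⟨a, ⟨haU (Set.mem_singleton a), hTaW2 (Or.inr (Set.mem_singleton a))⟩, rfl⟩,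
          ⟨b, ⟨hbV (Set.mem_singleton b), hTbW (Or.inr (Set.mem_singleton b))⟩, rfl⟩,
          hdisj _ _ ?_ (Or.inl ?_)⟩
        · exact Set.disjoint_iff_inter_eq_empty.1
            (((hUW.mono_right (Set.subset_union_left.trans hTbW)).mono_left
              Set.inter_subset_left))
        · exact Set.disjoint_iff_inter_eq_empty.1
            (((hVW2.mono_right (Set.subset_union_left.trans hTaW2)).mono_left
              Set.inter_subset_left))
        · exact (hVW2.symm.mono Set.inter_subset_right Set.inter_subset_left)
        · exact Set.disjoint_iff_inter_eq_empty.1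
            (((hUW.mono_right (Set.subset_union_left.trans hTbW)).mono_left
              Set.inter_subset_left))
  haveI : CompactSpace Y' := Quotient.compactSpace
  haveI : T35Space Y' := inferInstance
  -- the distinguished point and the one-point extension
  set p : Y' := q t₀ with hp_def
  set S : Set Y' := insert p (Set.range (fun x => q (u x))) with hS_def
  have hmemS : ∀ x : X, q (u x) ∈ S := fun x => Set.mem_insert_of_mem _ ⟨x, rfl⟩
  set e : X → ↥S := Set.codRestrict (fun x => q (u x)) S hmemS with he_def
  have hqu_ne_p : ∀ x : X, q (u x) ≠ p := by
    intro x h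
    rcases (hq_eq (u x) t₀).1 h with h' | ⟨h1, _⟩
    · exact hCT t₀ (h' ▸ hXC x) ht₀
    · exact h1 (hXC x)
  have hqC : Topology.IsOpenEmbedding (fun c : C => q c.1) := by
    refine Topology.IsOpenEmbedding.of_continuous_injective_isOpenMap
      (hq_cont.comp continuous_subtype_val) ?_ ?_
    · intro c d h
      rcases (hq_eq c.1 d.1).1 h with h' | ⟨h1, _⟩
      · exact Subtype.ext h'
      · exact absurd c.2 h1
    · intro O hO
      obtain ⟨O', hO'open, hO'eq⟩ := isOpen_induced_iff.1 hO
      have himg : (fun c : C => q c.1) '' O = q '' (O' ∩ C) := by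
        ext y
        constructor
        · rintro ⟨c, hcO, rfl⟩
          have hc : c.1 ∈ O' := by rw [← hO'eq] at hcO; exact hcO
          exact ⟨c.1, ⟨hc, c.2⟩, rfl⟩
        · rintro ⟨b, ⟨hbO', hbC⟩, rfl⟩
          refine ⟨⟨b, hbC⟩, ?_, rfl⟩
          rw [← hO'eq]; exact hbO'
      rw [himg]
      refine hqopen _ (hO'open.inter hCopen) (Or.inl ?_)
      ext b
      simp only [Set.mem_inter_iff, Set.mem_empty_iff_false, iff_false, not_and]
      rintro ⟨_, hbC⟩ hbT
      exact hbT hbC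
  have hqu_emb : Topology.IsEmbedding fun x => q (u x) := by
    have h1 : Topology.IsEmbedding (Set.codRestrict u C hXC) := hu.codRestrict _ _
    exact hqC.isEmbedding.comp h1
  have he_emb : Topology.IsEmbedding e := hqu_emb.codRestrict _ _
  have hdenseY : Dense (Set.range e) := by
    intro y
    rw [Topology.IsEmbedding.subtypeVal.toIsInducing.closure_eq_preimage_closure_image]
    have hrange : Subtype.val '' Set.range e = Set.range fun x => q (u x) := by
      rw [← Set.range_comp]; rfl
    rw [Set.mem_preimage, hrange]
    rcases Set.mem_insert_iff.1 y.2 with h | ⟨x, hx⟩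
    · rw [h, mem_closure_iff]
      intro O hOopen hpO
      have ht₀O : t₀ ∈ q ⁻¹' O := hpO
      obtain ⟨x, hx⟩ := hud.exists_mem_open (hOopen.preimage hq_cont) ⟨t₀, ht₀O⟩
      exact ⟨q (u x), hx, ⟨x, rfl⟩⟩
    · exact subset_closure ⟨x, hx⟩
  set p' : ↥S := ⟨p, Set.mem_insert _ _⟩ with hp'_def
  have hcompl : (Set.range e)ᶜ = {p'} := by
    ext y
    simp only [Set.mem_compl_iff, Set.mem_singleton_iff]
    constructor
    · intro hy
      rcases Set.mem_insert_iff.1 y.2 with h | ⟨x, hx⟩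
      · exact Subtype.ext h
      · exact absurd ⟨x, Subtype.ext hx⟩ hy
    · rintro rfl ⟨x, hx⟩
      exact hqu_ne_p x (congrArg Subtype.val hx)
  haveI hT35Y : T35Space ↥S :=
    { toT0Space := inferInstance
      toCompletelyRegularSpace := completelyRegularSpace_subtype S }
  have hccY : CountablyCompact ↥S := by
    intro U hU hcov
    have hp'm : p' ∈ ⋃ n, U n := by rw [hcov]; trivial
    obtain ⟨m, hm⟩ := Set.mem_iUnion.1 hp'm
    obtain ⟨V, hVopen, hVeq⟩ := isOpen_induced_iff.1 (hU m)
    set W : Set B := q ⁻¹' V with hW_def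
    have hWopen : IsOpen W := hVopen.preimage hq_cont
    have hpV : p ∈ V := by
      have h := hm
      rw [← hVeq] at h
      exact h
    have hTW : T ⊆ W := by
      intro t ht
      have hqt : q t = p := (hq_eq t t₀).2 (Or.inr ⟨ht, ht₀⟩)
      show q t ∈ V
      rw [hqt]; exact hpV
    have hFC : Wᶜ ⊆ ⋃ x, interior (closure (u '' M x)) := by
      rw [← hC_def]
      intro b hb
      by_contra hbC
      exact hb (hTW hbC)
    obtain ⟨s, hs⟩ := (hWopen.isClosed_compl.isCompact).elim_finite_subcover
      (fun x => interior (closure (u '' M x))) (fun _ => isOpen_interior) hFC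
    set A : Set X := e ⁻¹' (U m)ᶜ with hA_def
    have hAclosed : IsClosed A := ((hU m).isClosed_compl).preimage he_emb.continuous
    have hAsub : A ⊆ ⋃ x ∈ s, M x := by
      intro x hx
      have hxW : u x ∈ Wᶜ := by
        intro hxW
        refine hx ?_
        have hq1 : e x ∈ Subtype.val ⁻¹' V := hxW
        rw [hVeq] at hq1
        exact hq1
      obtain ⟨x', hx's, hmemi⟩ := Set.mem_iUnion₂.1 (hs hxW)
      exact Set.mem_iUnion₂.2 ⟨x', hx's, hpull x x' (interior_subset hmemi)⟩
    have hAcc : CCIn (e '' A) :=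
      (((ccIn_finsetBiUnion s fun x _ => hMcc x).mono_closed hAclosed hAsub).image
        he_emb.continuous)
    obtain ⟨t, ht⟩ := hAcc U hU (by rw [hcov]; exact Set.subset_univ _)
    refine ⟨insert m t, ?_⟩
    apply Set.eq_univ_of_forall
    intro y
    by_cases hy : y ∈ U m
    · exact Set.mem_iUnion₂.2 ⟨m, Finset.mem_insert_self m t, hy⟩
    · have hyA : y ∈ e '' A := by
        rcases Set.mem_insert_iff.1 y.2 with h | ⟨x, hx⟩
        · exact absurd (by rw [show y = p' from Subtype.ext h]; exact hm) hy
        · refine ⟨x, ?_, Subtype.ext hx⟩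
          intro hex
          exact hy (by rwa [show e x = y from Subtype.ext hx] at hex)
      obtain ⟨n, hn, hmem⟩ := Set.mem_iUnion₂.1 (ht hyA)
      exact Set.mem_iUnion₂.2 ⟨n, Finset.mem_insert_of_mem hn, hmem⟩
  exact ⟨↥S, inferInstance, e, he_emb, hdenseY, ⟨p', hcompl⟩, hT35Y, hccY⟩
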